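/- For every nonempty critical RVT code word W, the leading entry λ₀ of PC(W) is at least 2, and λ₀ = 2 if and only if W has the form R^{ρ} V for some ρ ≥ 1 (possibly followed by trailing R's after normalization). -/
import Mathlib


/-- The three symbols of an RVT code word. -/
inductive RVT : Type
  | R | V | T
deriving DecidableEq, Repr

/-- Replace a leading run of `T`'s by `R`'s. -/
def deT : List RVT → List RVT
  | RVT.T :: xs => RVT.R :: deT xs
  | xs => xs

/-- If the word begins with `V`, replace that `V` and the immediately
following `T`'s by `R`'s. -/
def reg : List RVT → List RVT
  | RVT.V :: xs => RVT.R :: deT xs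
  | xs => xs

/-- The lifted word `L(W)`: remove the first symbol (an `R`), then replace a
leading maximal critical block `V Tᵗ` by `R^(t+1)`. -/
def lift (w : List RVT) : List RVT := reg w.tail

/-- Length of the leading run of `T`'s. -/
def countT : List RVT → ℕ
  | RVT.T :: xs => countT xs + 1
  | _ => 0

/-- Fueled version of the front-end recursion for the Puiseux characteristic
(Theorem PCfront): base case `[1]` on all-`R` words; given
`PC(L(W)) = [l0; l1, ..., lg]`,
(A) if `W` begins `RR` then `PC(W) = [l0; l1+l0, ..., lg+l0]`;
(B) if `W` begins `R V T^t R` or `W = R V T^t` then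
`PC(W) = [(t+2)l0; (t+3)l0, l1+l0, ..., lg+l0]`;
(C) if `W` begins `R V T^t V` then `PC(W) = [l1; l1+l0, ..., lg+l0]`. -/
def PCf : ℕ → List RVT → List ℕ
  | 0, _ => [1]
  | _ + 1, [] => [1]
  | fuel + 1, w@(_ :: rest) =>
    if w.all (· = RVT.R) then [1]
    else
      let p := PCf fuel (lift w)
      let l0 := p.headD 1
      let tl := p.tail
      match rest with
      | RVT.V :: xs =>
        match xs.drop (countT xs) with
        | RVT.V :: _ => tl.headD 1 :: tl.map (· + l0)                                -- case (C)
        | _ => ((countT xs + 2) * l0) :: ((countT xs + 3) * l0) :: tl.map (· + l0)   -- case (B)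
      | _ => l0 :: tl.map (· + l0)                                                   -- case (A)

/-- The Puiseux characteristic `PC(W)` computed by the front-end recursion. -/
def PC (w : List RVT) : List ℕ := PCf w.length w

/-- A valid RVT code word: begins with `R`, and `T` occurs only immediately
after a `V` or a `T`. -/
def ValidRVT (w : List RVT) : Prop :=
  w.head? = some RVT.R ∧
  ∀ i, w[i + 1]? = some RVT.T → (w[i]? = some RVT.V ∨ w[i]? = some RVT.T)

/-- The function `E` on strings, with `E_T[a;b] = [a;a+b]`, `E_V[a;b] = [b;a+b]`,
`E_R = E_T`, and base value `E(empty) = [1;2]`; the leftmost symbol acts last. -/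
def Efun : List RVT → ℕ × ℕ
  | [] => (1, 2)
  | RVT.V :: q => ((Efun q).2, (Efun q).1 + (Efun q).2)
  | _ :: q => ((Efun q).1, (Efun q).1 + (Efun q).2)

/-- The Euclidean-type recursion: `Euc(1,2)` is the empty word; for coprime
`a < b`, if `b < 2a` then `Euc(a,b) = V · Euc(b-a,a)`, and if `b > 2a` then
`Euc(a,b) = T · Euc(a,b-a)`. -/
def Euc (a b : ℕ) : List RVT :=
  if a = 1 ∧ b = 2 then []
  else if _h1 : 0 < a ∧ a < b ∧ b < 2 * a then RVT.V :: Euc (b - a) a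
  else if _h2 : 0 < a ∧ a < b ∧ 2 * a < b then RVT.T :: Euc a (b - a)
  else []
termination_by a + b
decreasing_by all_goals omega


/-! ### Auxiliary lemmas for statement17 -/

namespace S17aux

/-- The "no T after R / no leading-context" chain condition. -/
def Q (l : List RVT) : Prop :=
  ∀ i, l[i + 1]? = some RVT.T → (l[i]? = some RVT.V ∨ l[i]? = some RVT.T)

lemma Q_tail {x : RVT} {l : List RVT} (h : Q (x :: l)) : Q l := by
  intro i hi
  have := h (i + 1) (by simpa using hi)
  simpa using this

lemma Q_consR {l : List RVT} (h0 : l.head? ≠ some RVT.T) (h : Q l) : Q (RVT.R :: l) := by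
  intro i hi
  cases i with
  | zero =>
    exfalso
    apply h0
    rcases l with _ | ⟨a, as⟩
    · simp at hi
    · simp_all
  | succ j =>
    have := h j (by simpa using hi)
    rcases this with h' | h'
    · left; simpa using h'
    · right; simpa using h'

lemma deT_head : ∀ l : List RVT, (deT l).head? ≠ some RVT.T := by
  intro l
  rcases l with _ | ⟨c, xs⟩
  · simp [deT]
  · cases c <;> simp [deT]

lemma deT_Q : ∀ {l : List RVT}, Q l → Q (deT l) := by
  intro l
  induction l with
  | nil => intro h; simpa [deT] using h
  | cons c xs ih =>
    intro h
    cases c with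
    | T => exact Q_consR (deT_head xs) (ih (Q_tail h))
    | V => simpa [deT] using h
    | R => simpa [deT] using h

lemma deT_length : ∀ l : List RVT, (deT l).length = l.length := by
  intro l
  induction l with
  | nil => simp [deT]
  | cons c xs ih => cases c <;> simp [deT, ih]

lemma deT_eq : ∀ l : List RVT,
    deT l = List.replicate (countT l) RVT.R ++ l.drop (countT l) := by
  intro l
  induction l with
  | nil => simp [deT, countT]
  | cons c xs ih =>
    cases c with
    | T => simp [deT, countT, ih, List.replicate_succ]
    | V => simp [deT, countT]
    | R => simp [deT, countT]

lemma countT_replicateR (k : ℕ) : countT (List.replicate k RVT.R) = 0 := by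
  cases k <;> simp [countT, List.replicate_succ]

lemma allR_iff (l : List RVT) :
    l.all (· = RVT.R) ↔ ∃ k, l = List.replicate k RVT.R := by
  constructor
  · intro h
    exact ⟨l.length, List.eq_replicate_length.2 (by simpa using List.all_eq_true.1 h)⟩
  · rintro ⟨k, rfl⟩
    simp [List.all_eq_true]

lemma PCf_allR (fuel : ℕ) (w : List RVT) (h : w.all (· = RVT.R)) : PCf fuel w = [1] := by
  cases fuel <;> cases w <;> simp [PCf, h]

lemma PCf_stepA (fuel : ℕ) (xs : List RVT) (h : ¬ (RVT.R::RVT.R::xs).all (· = RVT.R)) :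
    PCf (fuel+1) (RVT.R::RVT.R::xs) =
      (PCf fuel (RVT.R::xs)).headD 1 ::
        (PCf fuel (RVT.R::xs)).tail.map (· + (PCf fuel (RVT.R::xs)).headD 1) := by
  simp [PCf, h, lift, reg]

lemma PCf_stepC (fuel : ℕ) (xs ys : List RVT) (h : ¬ (RVT.R::RVT.V::xs).all (· = RVT.R))
    (hd : xs.drop (countT xs) = RVT.V :: ys) :
    PCf (fuel+1) (RVT.R::RVT.V::xs) =
      (PCf fuel (RVT.R :: deT xs)).tail.headD 1 ::
        (PCf fuel (RVT.R :: deT xs)).tail.map (· + (PCf fuel (RVT.R :: deT xs)).headD 1) := by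
  simp [PCf, h, lift, reg, hd]

lemma PCf_stepB (fuel : ℕ) (xs : List RVT) (h : ¬ (RVT.R::RVT.V::xs).all (· = RVT.R))
    (hd : ∀ ys, xs.drop (countT xs) ≠ RVT.V :: ys) :
    PCf (fuel+1) (RVT.R::RVT.V::xs) =
      ((countT xs + 2) * (PCf fuel (RVT.R :: deT xs)).headD 1) ::
      ((countT xs + 3) * (PCf fuel (RVT.R :: deT xs)).headD 1) ::
        (PCf fuel (RVT.R :: deT xs)).tail.map (· + (PCf fuel (RVT.R :: deT xs)).headD 1) := by
  rcases hdd : xs.drop (countT xs) with _ | ⟨c, ys⟩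
  · simp [PCf, h, lift, reg, hdd]
  · cases c
    · simp [PCf, h, lift, reg, hdd]
    · exact absurd hdd (hd ys)
    · simp [PCf, h, lift, reg, hdd]

/-- The normal form predicate. -/
def Form (w : List RVT) : Prop :=
  ∃ ρ k, 1 ≤ ρ ∧ w = List.replicate ρ RVT.R ++ RVT.V :: List.replicate k RVT.R

lemma form_consR {xs : List RVT} :
    Form (RVT.R :: RVT.R :: xs) ↔ Form (RVT.R :: xs) := by
  constructor
  · rintro ⟨ρ, k, hρ, h⟩
    rcases ρ with _ | ρ'
    · omega
    rw [List.replicate_succ] at h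
    injection h with _ h
    rcases ρ' with _ | ρ''
    · simp at h
    refine ⟨ρ'' + 1, k, by omega, h⟩
  · rintro ⟨ρ, k, hρ, h⟩
    exact ⟨ρ + 1, k, by omega, by rw [List.replicate_succ]; simp [h]⟩

lemma form_RV {xs : List RVT} :
    Form (RVT.R :: RVT.V :: xs) ↔ ∃ k, xs = List.replicate k RVT.R := by
  constructor
  · rintro ⟨ρ, k, hρ, h⟩
    rcases ρ with _ | ρ'
    · omega
    rw [List.replicate_succ] at h
    injection h with _ h
    rcases ρ' with _ | ρ''
    · simp at h; exact ⟨k, h⟩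
    · rw [List.replicate_succ] at h; injection h with h' _; exact absurd h' (by simp)
  · rintro ⟨k, rfl⟩
    exact ⟨1, k, le_refl 1, by simp⟩

end S17aux


namespace S17aux

lemma drop_countT_ne_T : ∀ (xs ys : List RVT), xs.drop (countT xs) ≠ RVT.T :: ys := by
  intro xs
  induction xs with
  | nil => intro ys; simp [countT]
  | cons c zs ih =>
    intro ys
    cases c with
    | T => simpa [countT] using ih ys
    | V => simp [countT]
    | R => simp [countT]

lemma main (fuel : ℕ) : ∀ w : List RVT, w.length ≤ fuel → ValidRVT w →
    ¬ w.all (· = RVT.R) →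
    ∃ a b t, PCf fuel w = a :: b :: t ∧ 2 ≤ a ∧ a < b ∧ (a = 2 ↔ Form w) := by
  induction fuel with
  | zero =>
    intro w hlen hv _
    have hw : w = [] := List.length_eq_zero_iff.1 (Nat.le_zero.1 hlen)
    subst hw
    simp [ValidRVT] at hv
  | succ f ih =>
    intro w hlen hv hall
    obtain ⟨h1, hQ0⟩ := hv
    rcases w with _ | ⟨c, rest⟩
    · simp at h1
    have hc : c = RVT.R := by simpa using h1
    subst hc
    have hQ : Q (RVT.R :: rest) := hQ0
    rcases rest with _ | ⟨c2, xs⟩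
    · exact absurd (by simp) hall
    cases c2 with
    | T =>
      exfalso
      have := hQ 0 (by simp)
      simp at this
    | R =>
      -- case (A)
      have hall' : ¬ (RVT.R :: xs).all (· = RVT.R) := by
        intro h; exact hall (by simpa using h)
      have hlen' : (RVT.R :: xs).length ≤ f := by
        simp at hlen ⊢; omega
      obtain ⟨a, b, t, hp, ha2, hab, hiff⟩ :=
        ih (RVT.R :: xs) hlen' ⟨rfl, Q_tail hQ⟩ hall'
      refine ⟨a, b + a, t.map (· + a), ?_, ha2, by omega, ?_⟩
      · rw [PCf_stepA f xs hall, hp]; simp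
      · rw [hiff]; exact form_consR.symm
    | V =>
      have hQxs : Q xs := Q_tail (Q_tail hQ)
      have hvlift : ValidRVT (RVT.R :: deT xs) :=
        ⟨rfl, Q_consR (deT_head xs) (deT_Q hQxs)⟩
      have hlenlift : (RVT.R :: deT xs).length ≤ f := by
        simp [deT_length] at hlen ⊢; omega
      by_cases hC : ∃ ys, xs.drop (countT xs) = RVT.V :: ys
      · -- case (C)
        obtain ⟨ys, hdd⟩ := hC
        have hnotallL : ¬ (RVT.R :: deT xs).all (· = RVT.R) := by
          intro h
          have hmem : RVT.V ∈ deT xs := by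
            rw [deT_eq]
            exact List.mem_append.2 (Or.inr (by rw [hdd]; simp))
          have := List.all_eq_true.1 h RVT.V (by simp [hmem])
          simp at this
        obtain ⟨a, b, t, hp, ha2, hab, _⟩ := ih _ hlenlift hvlift hnotallL
        refine ⟨b, b + a, t.map (· + a), ?_, by omega, by omega, ?_⟩
        · rw [PCf_stepC f xs ys hall hdd, hp]; simp
        constructor
        · intro h; exact absurd h (by omega)
        · intro hF
          exfalso
          obtain ⟨k, rfl⟩ := form_RV.1 hF
          rw [countT_replicateR, List.drop_zero] at hdd
          cases k with
          | zero => simp at hdd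
          | succ k =>
            rw [List.replicate_succ] at hdd
            injection hdd with h' _
            exact absurd h' (by simp)
      · -- case (B)
        push_neg at hC
        by_cases hall2 : (RVT.R :: deT xs).all (· = RVT.R)
        · have hp : PCf f (RVT.R :: deT xs) = [1] := PCf_allR _ _ hall2
          refine ⟨countT xs + 2, countT xs + 3, [], ?_, by omega, by omega, ?_⟩
          · rw [PCf_stepB f xs hall hC, hp]; simp
          constructor
          · intro h
            have ht : countT xs = 0 := by omega
            have hxs : xs.all (· = RVT.R) := by
              have h2 : (deT xs).all (· = RVT.R) := by simpa using hall2
              rw [deT_eq, ht] at h2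
              simpa using h2
            obtain ⟨k, rfl⟩ := (allR_iff xs).1 hxs
            exact form_RV.2 ⟨k, rfl⟩
          · intro hF
            obtain ⟨k, rfl⟩ := form_RV.1 hF
            rw [countT_replicateR]
        · obtain ⟨a, b, t, hp, ha2, hab, _⟩ := ih _ hlenlift hvlift hall2
          have h4 : 4 ≤ (countT xs + 2) * a := by nlinarith
          refine ⟨(countT xs + 2) * a, (countT xs + 3) * a, (b + a) :: t.map (· + a),
            ?_, by omega, by nlinarith, ?_⟩
          · rw [PCf_stepB f xs hall hC, hp]; simp
          constructor
          · intro h; exact absurd h (by omega)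
          · intro hF
            exfalso
            obtain ⟨k, rfl⟩ := form_RV.1 hF
            apply hall2
            rw [show deT (List.replicate k RVT.R) = List.replicate k RVT.R from by
              rw [deT_eq, countT_replicateR]; simp]
            rw [← List.replicate_succ]
            exact (allR_iff _).2 ⟨k + 1, rfl⟩

end S17aux

/-- For every critical RVT code word `W` (valid, and not consisting entirely
of `R`'s, so that after deleting trailing `R`'s it is nonempty and ends in `V`
or `T`), the leading entry `l0` of `PC(W)` is at least `2`, and `l0 = 2` iff
`W` has the form `R^ρ V` with `ρ ≥ 1`, possibly followed by trailing `R`'s. -/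
theorem statement17 (W : List RVT) (hW : ValidRVT W)
    (hcrit : ¬ W.all (· = RVT.R)) :
    2 ≤ (PC W).headD 1 ∧
    ((PC W).headD 1 = 2 ↔
      ∃ ρ k, 1 ≤ ρ ∧
        W = List.replicate ρ RVT.R ++ RVT.V :: List.replicate k RVT.R) := by
  obtain ⟨a, b, t, hp, ha2, hab, hiff⟩ :=
    S17aux.main W.length W (le_refl _) hW hcrit
  have hPC : PC W = a :: b :: t := hp
  rw [hPC]
  exact ⟨ha2, hiff⟩
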